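/- Let A and B be associative unital k-algebras and τ : B⊗A → A⊗B a k-linear map with τ(b⊗1) = 1⊗b and τ(1⊗a) = a⊗1 that satisfies the associativity constraint τ∘(m_B⊗m_A) = m_τ∘(τ⊗τ)∘(id_B⊗τ⊗id_A), where m_τ = (m_A⊗m_B)∘(id_A⊗τ⊗id_B). Then (A⊗B, m_τ) is an associative unital algebra with unit 1⊗1. -/
import Mathlib


open TensorProduct

/-- Čap–Schichl–Vanžura: if `τ : B⊗A → A⊗B` is a `k`-linear map with `τ(b⊗1) = 1⊗b`,
`τ(1⊗a) = a⊗1` satisfying the associativity constraint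
`τ∘(m_B⊗m_A) = m_τ∘(τ⊗τ)∘(id_B⊗τ⊗id_A)` (stated below on simple tensors),
then the twisted tensor product `(A⊗B, m_τ)` with
`m_τ = (m_A⊗m_B)∘(id_A⊗τ⊗id_B)` is an associative unital algebra with unit `1⊗1`.
Here `M` is the bilinear form of `m_τ`; on simple tensors
`M (a⊗b) (a'⊗b') = (a⊗1) · τ(b⊗a') · (1⊗b')` (the products taken in the ordinary
tensor product algebra `A⊗B`, which agrees with `(m_A⊗m_B)(a ⊗ τ(b⊗a') ⊗ b')`). -/
theorem twisted_tensor_product_is_associative_algebra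
    (k A B : Type*) [Field k] [Ring A] [Algebra k A] [Ring B] [Algebra k B]
    (τ : B ⊗[k] A →ₗ[k] A ⊗[k] B)
    (hτB : ∀ b : B, τ (b ⊗ₜ[k] (1 : A)) = (1 : A) ⊗ₜ[k] b)
    (hτA : ∀ a : A, τ ((1 : B) ⊗ₜ[k] a) = a ⊗ₜ[k] (1 : B))
    (M : A ⊗[k] B →ₗ[k] A ⊗[k] B →ₗ[k] A ⊗[k] B)
    (hM : ∀ (a a' : A) (b b' : B),
      M (a ⊗ₜ[k] b) (a' ⊗ₜ[k] b') =
        (a ⊗ₜ[k] (1 : B)) * τ (b ⊗ₜ[k] a') * ((1 : A) ⊗ₜ[k] b'))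
    (hassoc : ∀ (b b' : B) (a a' : A),
      τ ((b * b') ⊗ₜ[k] (a * a')) =
        TensorProduct.lift M (TensorProduct.map τ τ
          ((TensorProduct.assoc k B A (B ⊗[k] A)).symm
            (b ⊗ₜ[k] ((TensorProduct.assoc k A B A) ((τ (b' ⊗ₜ[k] a)) ⊗ₜ[k] a')))))) :
    (∀ x y z : A ⊗[k] B, M (M x y) z = M x (M y z)) ∧
      (∀ x : A ⊗[k] B, M ((1 : A) ⊗ₜ[k] (1 : B)) x = x ∧
        M x ((1 : A) ⊗ₜ[k] (1 : B)) = x) := by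
  -- L1 : left translation by a⊗1
  have L1 : ∀ (a : A) (x y : A ⊗[k] B), M ((a ⊗ₜ[k] (1 : B)) * x) y = (a ⊗ₜ[k] (1 : B)) * M x y := by
    intro a x y
    induction x using TensorProduct.induction_on with
    | zero => simp
    | tmul a₁ b₁ =>
      induction y using TensorProduct.induction_on with
      | zero => simp
      | tmul a₂ b₂ =>
        simp only [hM, Algebra.TensorProduct.tmul_mul_tmul, ← mul_assoc, one_mul]
      | add u v hu hv => rw [map_add, map_add, mul_add, hu, hv]
    | add u v hu hv =>
        rw [mul_add, map_add, LinearMap.add_apply, hu, hv, map_add, LinearMap.add_apply, mul_add]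
  -- L2 : right translation by 1⊗b
  have L2 : ∀ (b : B) (x y : A ⊗[k] B), M x (y * ((1 : A) ⊗ₜ[k] b)) = M x y * ((1 : A) ⊗ₜ[k] b) := by
    intro b x y
    induction x using TensorProduct.induction_on with
    | zero => simp
    | tmul a₁ b₁ =>
      induction y using TensorProduct.induction_on with
      | zero => simp
      | tmul a₂ b₂ =>
        simp only [hM, Algebra.TensorProduct.tmul_mul_tmul, mul_assoc, mul_one, one_mul]
      | add u v hu hv => rw [add_mul, map_add, map_add, hu, hv, add_mul]
    | add u v hu hv =>
        rw [map_add, LinearMap.add_apply, LinearMap.add_apply, hu, hv, add_mul]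
  -- L3 : M (x * (1⊗b')) (a''⊗1) = M x (τ (b'⊗a''))
  have L3 : ∀ (x : A ⊗[k] B) (b' : B) (a'' : A),
      M (x * ((1 : A) ⊗ₜ[k] b')) (a'' ⊗ₜ[k] (1 : B)) = M x (τ (b' ⊗ₜ[k] a'')) := by
    intro x b' a''
    induction x using TensorProduct.induction_on with
    | zero => simp
    | tmul a₁ b₁ =>
      have hex' : τ ((b₁ * b') ⊗ₜ[k] a'') =
          M ((1 : A) ⊗ₜ[k] b₁) (τ (b' ⊗ₜ[k] a'')) := by
        have := hassoc b₁ b' 1 a''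
        rw [hτB, one_mul] at this
        simpa [hτB] using this
      rw [Algebra.TensorProduct.tmul_mul_tmul, mul_one, hM, hex',
        ← Algebra.TensorProduct.one_def, mul_one, ← L1]
      congr 1
      rw [Algebra.TensorProduct.tmul_mul_tmul, mul_one, one_mul]
    | add u v hu hv =>
        rw [add_mul, map_add, LinearMap.add_apply, hu, hv, map_add, LinearMap.add_apply]
  -- L4 : M (1⊗b) ((a'⊗1) * y) = M (τ (b⊗a')) y
  have L4 : ∀ (b : B) (a' : A) (y : A ⊗[k] B),
      M ((1 : A) ⊗ₜ[k] b) ((a' ⊗ₜ[k] (1 : B)) * y) = M (τ (b ⊗ₜ[k] a')) y := by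
    intro b a' y
    induction y using TensorProduct.induction_on with
    | zero => simp
    | tmul c d =>
      have hex : τ (b ⊗ₜ[k] (a' * c)) = M (τ (b ⊗ₜ[k] a')) (c ⊗ₜ[k] (1 : B)) := by
        have := hassoc b 1 a' c
        rw [hτA, mul_one] at this
        simpa [hτA] using this
      rw [Algebra.TensorProduct.tmul_mul_tmul, one_mul, hM, hex,
        ← Algebra.TensorProduct.one_def, one_mul, ← L2]
      congr 1
      rw [Algebra.TensorProduct.tmul_mul_tmul, mul_one, one_mul]
    | add u v hu hv => rw [mul_add, map_add, hu, hv, map_add]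
  constructor
  · intro x y z
    induction x using TensorProduct.induction_on with
    | zero => simp
    | tmul a b =>
      induction y using TensorProduct.induction_on with
      | zero => simp
      | tmul a' b' =>
        induction z using TensorProduct.induction_on with
        | zero => simp
        | tmul a'' b'' =>
          rw [hM, hM]
          have hz : (a'' ⊗ₜ[k] b'') = (a'' ⊗ₜ[k] (1:B)) * ((1:A) ⊗ₜ[k] b'') := by
            rw [Algebra.TensorProduct.tmul_mul_tmul, mul_one, one_mul]
          have hab : (a ⊗ₜ[k] b) = (a ⊗ₜ[k] (1:B)) * ((1:A) ⊗ₜ[k] b) := by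
            rw [Algebra.TensorProduct.tmul_mul_tmul, mul_one, one_mul]
          rw [hz, L2, mul_assoc (a ⊗ₜ[k] (1:B)), L1, L3]
          rw [L2, hab, L1, L4]
        | add u v hu hv => simp [map_add, hu, hv]
      | add u v hu hv => simp [map_add, hu, hv]
    | add u v hu hv => simp [map_add, hu, hv]
  · intro x
    induction x using TensorProduct.induction_on with
    | zero => simp
    | tmul a b => constructor <;> rw [hM] <;> simp [hτA, hτB, Algebra.TensorProduct.tmul_mul_tmul]
    | add u v hu hv => simp [map_add, hu.1, hu.2, hv.1, hv.2]
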